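/- For any finite simple graph G with m edges and degeneracy α, the sum over all edges e = {u,v} of min(d(u), d(v)) is at most 2mα, where d denotes vertex degree. -/

import Mathlib

open Finset

private lemma aux1 {V : Type*} [Fintype V] [DecidableEq V]
    (G : SimpleGraph V) [DecidableRel G.Adj] (α : ℕ)
    (hα : ∀ s : Finset V, s.Nonempty →
      ∃ v ∈ s, (s.filter (fun u => G.Adj v u)).card ≤ α)
    (s : Finset V) :
    ∑ e ∈ G.edgeFinset.filter (fun e => ∀ x ∈ e, x ∈ s),
      Sym2.lift ⟨fun u v => min (G.degree u) (G.degree v),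
        fun u v => min_comm _ _⟩ e
    ≤ α * ∑ v ∈ s, G.degree v := by
  induction s using Finset.strongInduction with
  | _ s ih =>
    rcases s.eq_empty_or_nonempty with rfl | hs
    · have : G.edgeFinset.filter (fun e => ∀ x ∈ e, x ∈ (∅ : Finset V)) = ∅ := by
        apply Finset.filter_eq_empty_iff.2
        intro e _
        induction e with
        | _ a b =>
          simp only [not_forall]
          exact ⟨a, Sym2.mem_mk_left a b, by simp⟩
      rw [this, Finset.sum_empty]; exact Nat.zero_le _
    · obtain ⟨v, hv, hdeg⟩ := hα s hs
      set f : Sym2 V → ℕ := Sym2.lift ⟨fun u v => min (G.degree u) (G.degree v),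
        fun u v => min_comm _ _⟩ with hf
      have hsplit :
          ∑ e ∈ G.edgeFinset.filter (fun e => ∀ x ∈ e, x ∈ s), f e
          = ∑ e ∈ (G.edgeFinset.filter (fun e => ∀ x ∈ e, x ∈ s)).filter (fun e => v ∉ e), f e
            + ∑ e ∈ (G.edgeFinset.filter (fun e => ∀ x ∈ e, x ∈ s)).filter (fun e => v ∈ e), f e := by
        rw [← Finset.sum_filter_add_sum_filter_not _ (fun e => v ∈ e)]
        ring
      have h1 : (G.edgeFinset.filter (fun e => ∀ x ∈ e, x ∈ s)).filter (fun e => v ∉ e)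
          = G.edgeFinset.filter (fun e => ∀ x ∈ e, x ∈ s.erase v) := by
        rw [Finset.filter_filter]
        apply Finset.filter_congr
        intro e _
        constructor
        · rintro ⟨h1, h2⟩ x hx
          exact Finset.mem_erase.2 ⟨fun h => h2 (h ▸ hx), h1 x hx⟩
        · intro h
          refine ⟨fun x hx => (Finset.mem_erase.1 (h x hx)).2, fun hvmem => ?_⟩
          exact (Finset.mem_erase.1 (h v hvmem)).1 rfl
      -- the edges containing v
      have h2 : ∑ e ∈ (G.edgeFinset.filter (fun e => ∀ x ∈ e, x ∈ s)).filter (fun e => v ∈ e), f e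
          ≤ α * G.degree v := by
        have himg : (G.edgeFinset.filter (fun e => ∀ x ∈ e, x ∈ s)).filter (fun e => v ∈ e)
            ⊆ (s.filter (fun u => G.Adj v u)).image (fun u => s(v, u)) := by
          intro e he
          simp only [Finset.mem_filter, SimpleGraph.mem_edgeFinset] at he
          obtain ⟨⟨hee, hsub⟩, hve⟩ := he
          induction e with
          | _ a b =>
            rw [Sym2.mem_iff] at hve
            simp only [Finset.mem_image, Finset.mem_filter]
            rcases hve with rfl | rfl
            · exact ⟨b, ⟨hsub b (Sym2.mem_mk_right _ _), hee⟩, rfl⟩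
            · exact ⟨a, ⟨hsub a (Sym2.mem_mk_left _ _),
                (G.adj_symm hee : _)⟩, Sym2.eq_swap⟩
        calc ∑ e ∈ (G.edgeFinset.filter (fun e => ∀ x ∈ e, x ∈ s)).filter (fun e => v ∈ e), f e
            ≤ ∑ e ∈ (s.filter (fun u => G.Adj v u)).image (fun u => s(v, u)), f e :=
              Finset.sum_le_sum_of_subset himg
          _ = ∑ u ∈ s.filter (fun u => G.Adj v u), f s(v, u) := by
              rw [Finset.sum_image]
              intro a _ b _ hab
              rcases Sym2.eq_iff.1 hab with ⟨_, h⟩ | ⟨h1, h2⟩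
              · exact h
              · exact h2.trans h1
          _ ≤ ∑ u ∈ s.filter (fun u => G.Adj v u), G.degree v := by
              apply Finset.sum_le_sum
              intro u _
              simp [hf]
          _ = (s.filter (fun u => G.Adj v u)).card * G.degree v := by
              rw [Finset.sum_const, smul_eq_mul]
          _ ≤ α * G.degree v := Nat.mul_le_mul_right _ hdeg
      have h3 := ih (s.erase v) (Finset.erase_ssubset hv)
      calc ∑ e ∈ G.edgeFinset.filter (fun e => ∀ x ∈ e, x ∈ s), f e
          = _ + _ := hsplit
        _ ≤ α * ∑ u ∈ s.erase v, G.degree u + α * G.degree v := by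
            rw [h1]; exact Nat.add_le_add h3 h2
        _ = α * ∑ u ∈ s, G.degree u := by
            rw [← Nat.mul_add, Finset.sum_erase_add _ _ hv]

/-- If `α` is (at least) the degeneracy of `G`, i.e. every nonempty induced subgraph
has a vertex of (induced) degree at most `α`, then
`∑_{e={u,v}∈E} min(d(u), d(v)) ≤ 2 m α`. -/
theorem stmt1 {V : Type*} [Fintype V] [DecidableEq V]
    (G : SimpleGraph V) [DecidableRel G.Adj] (α : ℕ)
    (hα : ∀ s : Finset V, s.Nonempty →
      ∃ v ∈ s, (s.filter (fun u => G.Adj v u)).card ≤ α) :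
    ∑ e ∈ G.edgeFinset,
      Sym2.lift ⟨fun u v => min (G.degree u) (G.degree v),
        fun u v => min_comm _ _⟩ e
    ≤ 2 * G.edgeFinset.card * α := by
  have h := aux1 G α hα Finset.univ
  have heq : G.edgeFinset.filter (fun e => ∀ x ∈ e, x ∈ (Finset.univ : Finset V))
      = G.edgeFinset := Finset.filter_true_of_mem (by simp)
  rw [heq] at h
  calc ∑ e ∈ G.edgeFinset, _ ≤ α * ∑ v : V, G.degree v := h
    _ = α * (2 * G.edgeFinset.card) := by
        rw [SimpleGraph.sum_degrees_eq_twice_card_edges]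
    _ = 2 * G.edgeFinset.card * α := by ring
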